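/- Let V be a vector space over a field of characteristic zero (or a module over a ℚ-algebra) with linear endomorphisms Q, K, D such that K is nilpotent, Q ∘ K − K ∘ Q = D, and D ∘ K = K ∘ D. Define exp(±K) := Σ_{k≥0} (±K)^k / k! (finite sums). Then for every O ∈ V: Q O = D O if and only if Q(exp(−K) O) = 0; moreover exp(K)(exp(−K) O) = O. In particular, O ↦ exp(−K) O is a bijection between solutions of the descent-type equation Q O = D O and Q-closed elements, with inverse W ↦ exp(K) W. -/

import Mathlib

/-- The finite exponential sum `exp(N) = Σ_{k} N^k / k!` of a nilpotent element
`N` with `N ^ m = 0` in an algebra over a field of characteristic zero. -/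
noncomputable def nilExpSum (F : Type*) {R : Type*} [Field F] [Ring R] [Algebra F R]
    (N : R) (m : ℕ) : R :=
  ∑ k ∈ Finset.range (m + 1), ((k.factorial : F)⁻¹) • N ^ k

section Aux

variable {F R : Type*} [Field F] [CharZero F] [Ring R] [Algebra F R]

/-- Iterated commutator: if `[Q,N] = C` and `C` commutes with `N`, then
`[Q, N^(k+1)] = (k+1) • (C * N^k)`. -/
lemma comm_pow_aux (Q N C : R) (hC : Q * N - N * Q = C) (hNC : C * N = N * C) :
    ∀ k : ℕ, Q * N ^ (k + 1) - N ^ (k + 1) * Q = (((k + 1 : ℕ)) : R) * (C * N ^ k) := by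
  intro k
  induction k with
  | zero => simpa using hC
  | succ k ih =>
      have hcomm : C * N ^ (k + 1) = N ^ (k + 1) * C :=
        (Commute.pow_right (hNC : Commute C N) (k + 1))
      have ihe : Q * N ^ (k + 1) = (((k + 1 : ℕ)) : R) * (C * N ^ k) + N ^ (k + 1) * Q :=
        sub_eq_iff_eq_add.mp ih
      have hQN : Q * N = C + N * Q := sub_eq_iff_eq_add.mp hC
      have key : Q * N ^ (k + 2)
          = (((k + 2 : ℕ)) : R) * (C * N ^ (k + 1)) + N ^ (k + 2) * Q := by
        calc Q * N ^ (k + 2) = (Q * N ^ (k + 1)) * N := by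
              rw [pow_succ, ← mul_assoc]
          _ = ((((k + 1 : ℕ)) : R) * (C * N ^ k) + N ^ (k + 1) * Q) * N := by rw [ihe]
          _ = (((k + 1 : ℕ)) : R) * (C * N ^ (k + 1)) + N ^ (k + 1) * (Q * N) := by
              noncomm_ring
          _ = (((k + 1 : ℕ)) : R) * (C * N ^ (k + 1)) + (N ^ (k + 1) * C + N ^ (k + 2) * Q) := by
              rw [hQN]; noncomm_ring
          _ = (((k + 1 : ℕ)) : R) * (C * N ^ (k + 1)) + (C * N ^ (k + 1) + N ^ (k + 2) * Q) := by
              rw [hcomm]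
          _ = (((k + 2 : ℕ)) : R) * (C * N ^ (k + 1)) + N ^ (k + 2) * Q := by
              push_cast
              noncomm_ring
      rw [key]
      abel

/-- If `[Q,N] = C`, `C` commutes with `N`, and `N^m = 0`, then
`Q * exp(N) = exp(N) * Q + C * exp(N)`. -/
lemma comm_exp_aux (Q N C : R) (m : ℕ) (hN : N ^ m = 0)
    (hC : Q * N - N * Q = C) (hNC : C * N = N * C) :
    Q * nilExpSum F N m = nilExpSum F N m * Q + C * nilExpSum F N m := by
  have key : Q * nilExpSum F N m - nilExpSum F N m * Q = C * nilExpSum F N m := by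
    have e1 : Q * nilExpSum F N m - nilExpSum F N m * Q
        = ∑ k ∈ Finset.range (m + 1),
            ((k.factorial : F)⁻¹) • (Q * N ^ k - N ^ k * Q) := by
      simp only [nilExpSum, Finset.mul_sum, Finset.sum_mul, mul_smul_comm, smul_mul_assoc,
        ← Finset.sum_sub_distrib, smul_sub]
    rw [e1, Finset.sum_range_succ']
    have h0 : ((Nat.factorial 0 : F)⁻¹) • (Q * N ^ 0 - N ^ 0 * Q) = 0 := by simp
    rw [h0, add_zero]
    have e2 : ∀ k ∈ Finset.range m,
        (((k + 1).factorial : F)⁻¹) • (Q * N ^ (k + 1) - N ^ (k + 1) * Q)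
          = ((k.factorial : F)⁻¹) • (C * N ^ k) := by
      intro k _
      rw [comm_pow_aux Q N C hC hNC k]
      have hcast : (((k + 1 : ℕ)) : R) * (C * N ^ k) = (((k + 1 : ℕ)) : F) • (C * N ^ k) := by
        rw [← nsmul_eq_mul, ← Nat.cast_smul_eq_nsmul F]
      rw [hcast, smul_smul]
      congr 1
      have hf : ((k + 1).factorial : F) = ((k + 1 : ℕ) : F) * (k.factorial : F) := by
        rw [Nat.factorial_succ]; push_cast; ring
      have h1 : (k.factorial : F) ≠ 0 := Nat.cast_ne_zero.2 k.factorial_ne_zero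
      have h2 : ((k + 1 : ℕ) : F) ≠ 0 := Nat.cast_ne_zero.2 k.succ_ne_zero
      rw [hf, mul_inv]
      field_simp
    rw [Finset.sum_congr rfl e2]
    have e3 : ∑ k ∈ Finset.range m, ((k.factorial : F)⁻¹) • (C * N ^ k)
        = C * ∑ k ∈ Finset.range m, ((k.factorial : F)⁻¹) • N ^ k := by
      rw [Finset.mul_sum]
      exact Finset.sum_congr rfl fun k _ => (mul_smul_comm _ _ _).symm
    rw [e3]
    congr 1
    rw [nilExpSum, Finset.sum_range_succ, hN, smul_zero, add_zero]
  rw [sub_eq_iff_eq_add.mp key, add_comm]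

/-- `exp(N) * exp(-N) = 1` for `N` nilpotent with `N^m = 0`. -/
lemma nilExp_mul_neg (N : R) (m : ℕ) (hN : N ^ m = 0) :
    nilExpSum F N m * nilExpSum F (-N) m = 1 := by
  classical
  set p : Polynomial F := ∑ k ∈ Finset.range (m + 1),
    Polynomial.C ((k.factorial : F)⁻¹) * Polynomial.X ^ k with hp_def
  set q : Polynomial F := ∑ k ∈ Finset.range (m + 1),
    Polynomial.C ((-1 : F) ^ k * (k.factorial : F)⁻¹) * Polynomial.X ^ k with hq_def
  have hp : Polynomial.aeval N p = nilExpSum F N m := by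
    rw [hp_def, map_sum, nilExpSum]
    refine Finset.sum_congr rfl fun k _ => ?_
    simp [Algebra.smul_def]
  have hq : Polynomial.aeval N q = nilExpSum F (-N) m := by
    rw [hq_def, map_sum, nilExpSum]
    refine Finset.sum_congr rfl fun k _ => ?_
    have : (-N) ^ k = ((-1 : F) ^ k) • N ^ k := by
      rw [← smul_pow]
      norm_num
    rw [this, smul_smul, mul_comm ((k.factorial : F)⁻¹)]
    simp [Algebra.smul_def]
  have hpc : ∀ i, i ≤ m → p.coeff i = (i.factorial : F)⁻¹ := by
    intro i hi
    rw [hp_def, Polynomial.finset_sum_coeff]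
    simp only [Polynomial.coeff_C_mul, Polynomial.coeff_X_pow, mul_ite, mul_one, mul_zero]
    rw [Finset.sum_ite_eq (Finset.range (m + 1)) i]
    simp [Nat.lt_succ_iff, hi]
  have hqc : ∀ i, i ≤ m → q.coeff i = (-1 : F) ^ i * (i.factorial : F)⁻¹ := by
    intro i hi
    rw [hq_def, Polynomial.finset_sum_coeff]
    simp only [Polynomial.coeff_C_mul, Polynomial.coeff_X_pow, mul_ite, mul_one, mul_zero]
    rw [Finset.sum_ite_eq (Finset.range (m + 1)) i]
    simp [Nat.lt_succ_iff, hi]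
  have key : ∀ n, n ≤ m → (p * q).coeff n = if n = 0 then 1 else 0 := by
    intro n hn
    rw [Polynomial.coeff_mul, Finset.Nat.sum_antidiagonal_eq_sum_range_succ_mk]
    have e1 : ∀ k ∈ Finset.range (n + 1),
        p.coeff k * q.coeff (n - k)
          = ((n.factorial : F)⁻¹) * ((-1 : F) ^ (n - k) * (n.choose k : F)) := by
      intro k hk
      rw [Finset.mem_range, Nat.lt_succ_iff] at hk
      rw [hpc k (le_trans hk hn), hqc (n - k) (le_trans (Nat.sub_le n k) hn)]
      have hch : (n.choose k : F) * (k.factorial : F) * ((n - k).factorial : F)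
          = (n.factorial : F) := by
        exact_mod_cast congrArg (Nat.cast : ℕ → F)
          (Nat.choose_mul_factorial_mul_factorial hk)
      have h1 : (k.factorial : F) ≠ 0 := Nat.cast_ne_zero.2 k.factorial_ne_zero
      have h2 : ((n - k).factorial : F) ≠ 0 := Nat.cast_ne_zero.2 (n - k).factorial_ne_zero
      have h3 : (n.factorial : F) ≠ 0 := Nat.cast_ne_zero.2 n.factorial_ne_zero
      field_simp
      linear_combination (-1 : F) * hch
    rw [Finset.sum_congr rfl e1, ← Finset.mul_sum]
    have e2 : ∑ k ∈ Finset.range (n + 1), ((-1 : F) ^ (n - k) * (n.choose k : F))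
        = ∑ k ∈ Finset.range (n + 1), ((-1 : F) ^ k * (n.choose k : F)) := by
      rw [← Finset.sum_range_reflect]
      refine Finset.sum_congr rfl fun k hk => ?_
      rw [Finset.mem_range, Nat.lt_succ_iff] at hk
      rw [Nat.succ_sub_one, Nat.sub_sub_self hk, Nat.choose_symm hk]
    by_cases hn0 : n = 0
    · subst hn0; simp
    · have := Int.alternating_sum_range_choose_of_ne hn0
      have hF : ∑ k ∈ Finset.range (n + 1), ((-1 : F) ^ k * (n.choose k : F)) = 0 := by
        have := congrArg (Int.cast : ℤ → F) this
        push_cast at this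
        simpa using this
      rw [e2, hF, mul_zero, if_neg hn0]
  have hco : nilExpSum F N m * nilExpSum F (-N) m = Polynomial.aeval N (p * q) := by
    rw [map_mul, hp, hq]
  rw [hco, Polynomial.aeval_eq_sum_range (p := p * q) N]
  rw [Finset.sum_eq_single_of_mem 0 (Finset.mem_range.2 (Nat.succ_pos _))]
  · have h0 : (p * q).coeff 0 = 1 := by simpa using key 0 (Nat.zero_le m)
    rw [h0]; simp
  · intro i _ hi
    by_cases him : i ≤ m
    · rw [key i him, if_neg hi, zero_smul]
    · rw [pow_eq_zero_of_le (le_of_lt (Nat.lt_of_not_le him)) hN, smul_zero]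

end Aux

/-- Descendant sequences are `exp(K)`-images of `Q`-closed elements: with `K`
nilpotent, `Q ∘ K - K ∘ Q = D`, and `D ∘ K = K ∘ D`, an element `O` solves the
descent-type equation `Q O = D O` iff `exp(-K) O` is `Q`-closed; moreover
`exp(K) (exp(-K) O) = O`, so `O ↦ exp(-K) O` is a bijection between solutions
of `Q O = D O` and `Q`-closed elements, with inverse `W ↦ exp(K) W`. -/
theorem descent_solutions_bijection
    {F V : Type*} [Field F] [CharZero F] [AddCommGroup V] [Module F V]
    (Q K D : Module.End F V) (m : ℕ) (hm : K ^ m = 0)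
    (h1 : Q * K - K * Q = D)
    (h2 : D * K = K * D) :
    ∀ O : V,
      (Q O = D O ↔ Q (nilExpSum F (-K) m O) = 0) ∧
      nilExpSum F K m (nilExpSum F (-K) m O) = O := by
  have hmK : (-K) ^ m = 0 := by
    rw [neg_pow, hm, mul_zero]
  -- exp(K) * exp(-K) = 1 and exp(-K) * exp(K) = 1
  have hinv1 : nilExpSum F K m * nilExpSum F (-K) m = 1 := nilExp_mul_neg (F := F) K m hm
  have hinv2 : nilExpSum F (-K) m * nilExpSum F K m = 1 := by
    have := nilExp_mul_neg (F := F) (-K) m hmK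
    rwa [neg_neg] at this
  -- Q * exp(-K) = exp(-K) * (Q - D)
  have hcomm : Q * nilExpSum F (-K) m
      = nilExpSum F (-K) m * Q + (-D) * nilExpSum F (-K) m := by
    refine comm_exp_aux Q (-K) (-D) m hmK ?_ ?_
    · have : Q * -K - -K * Q = -(Q * K - K * Q) := by noncomm_ring
      rw [this, h1]
    · rw [neg_mul_neg, neg_mul_neg, h2]
  have hDE : D * nilExpSum F (-K) m = nilExpSum F (-K) m * D := by
    rw [nilExpSum, Finset.mul_sum, Finset.sum_mul]
    refine Finset.sum_congr rfl fun k _ => ?_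
    rw [mul_smul_comm, smul_mul_assoc]
    congr 1
    have hc : Commute D (-K) := by
      simp only [Commute, SemiconjBy, mul_neg, neg_mul, h2]
    exact (hc.pow_right k).eq
  have hQE : Q * nilExpSum F (-K) m = nilExpSum F (-K) m * (Q - D) := by
    rw [hcomm, neg_mul, hDE, mul_sub]
    noncomm_ring
  intro O
  constructor
  · constructor
    · intro hO
      have : Q (nilExpSum F (-K) m O) = (Q * nilExpSum F (-K) m) O := rfl
      rw [this, hQE]
      have : (Q - D) O = 0 := by
        rw [LinearMap.sub_apply, hO, sub_self]
      calc (nilExpSum F (-K) m * (Q - D)) O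
          = nilExpSum F (-K) m ((Q - D) O) := rfl
        _ = 0 := by rw [this, map_zero]
    · intro hW
      have h0 : (nilExpSum F (-K) m) ((Q - D) O) = 0 := by
        have : (nilExpSum F (-K) m * (Q - D)) O = 0 := by
          rw [← hQE]; exact hW
        exact this
      have h1' : (Q - D) O = 0 := by
        calc (Q - D) O = (nilExpSum F K m * nilExpSum F (-K) m) ((Q - D) O) := by
              rw [hinv1]; rfl
          _ = nilExpSum F K m ((nilExpSum F (-K) m) ((Q - D) O)) := rfl
          _ = nilExpSum F K m 0 := by rw [h0]
          _ = 0 := map_zero _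
      have := sub_eq_zero.1 (by simpa [LinearMap.sub_apply] using h1')
      exact this
  · calc nilExpSum F K m (nilExpSum F (-K) m O)
        = (nilExpSum F K m * nilExpSum F (-K) m) O := rfl
      _ = O := by rw [hinv1]; rfl
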